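/- arXiv:1501.01519 — 4 statements merged into one kernel-verified Lean document; each statement's English description precedes it below -/
import Mathlib

section
/- Let k, N be integers with 0 ≤ k ≤ N−2 and let τ > 0. Define φ(t) = (1/(k+1))·(1 − (τ/t)^{k+1}) for t > 0, and define the vector field χ_τ(y,z) := (φ(|y|)·y, z) for y ∈ ℝ^{k+1} with y ≠ 0 and z ∈ ℝ^{N−k−1}. Then χ_τ is differentiable at every point (y,z) with y ≠ 0, and its divergence satisfies div χ_τ(y,z) = N − k at every such point. -/
/-- Let `0 ≤ k ≤ N−2`, `τ > 0`, `φ(t) = (1/(k+1))·(1 − (τ/t)^{k+1})` and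
`χ_τ(y,z) = (φ(|y|)·y, z)` on `ℝ^{k+1} × ℝ^{N−k−1}`.  Then `χ_τ` is differentiable at every
point `(y,z)` with `y ≠ 0` and its divergence (the trace of its total derivative) there
equals `N − k`. -/
theorem stmt_1 (k N : ℕ) (hk : k + 2 ≤ N) (τ : ℝ) (hτ : 0 < τ)
    (φ : ℝ → ℝ)
    (hφ : ∀ t : ℝ, 0 < t → φ t = (1 / ((k : ℝ) + 1)) * (1 - (τ / t) ^ (k + 1)))
    (χ : EuclideanSpace ℝ (Fin (k + 1)) × EuclideanSpace ℝ (Fin (N - k - 1)) →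
         EuclideanSpace ℝ (Fin (k + 1)) × EuclideanSpace ℝ (Fin (N - k - 1)))
    (hχ : ∀ (y : EuclideanSpace ℝ (Fin (k + 1))) (z : EuclideanSpace ℝ (Fin (N - k - 1))),
      y ≠ 0 → χ (y, z) = (φ ‖y‖ • y, z)) :
    ∀ (y : EuclideanSpace ℝ (Fin (k + 1))) (z : EuclideanSpace ℝ (Fin (N - k - 1))),
      y ≠ 0 →
      DifferentiableAt ℝ χ (y, z) ∧
      LinearMap.trace ℝ (EuclideanSpace ℝ (Fin (k + 1)) × EuclideanSpace ℝ (Fin (N - k - 1)))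
        (fderiv ℝ χ (y, z)).toLinearMap = (N : ℝ) - (k : ℝ) := by
  classical
  intro y z hy
  have hy0 : (0:ℝ) < ‖y‖ := norm_pos_iff.mpr hy
  have hm0 : (0:ℝ) < (k:ℝ) + 1 := by positivity
  set a : ℝ := 1 / ((k:ℝ) + 1) with ha
  set C : ℝ := τ ^ (k+1) / ((k:ℝ) + 1) with hC
  set e : ℝ := -((k:ℝ) + 1) / 2 with he
  set s : ℝ := ‖y‖ ^ 2 with hs
  have hspos : 0 < s := by positivity
  set c : EuclideanSpace ℝ (Fin (k + 1)) → ℝ :=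
    fun x => a - C * (‖x‖ ^ 2 : ℝ) ^ e with hcdef
  set d : ℝ := -(2 * C * e * s ^ (e - 1)) with hd
  -- derivative of the scalar factor
  have hg : HasFDerivAt (fun x : EuclideanSpace ℝ (Fin (k + 1)) => ((‖x‖ ^ 2 : ℝ) ^ e : ℝ))
      ((e * s ^ (e - 1)) • (2 • innerSL ℝ y)) y := by
    have h1 : HasFDerivAt (fun x : EuclideanSpace ℝ (Fin (k + 1)) => (‖x‖ ^ 2 : ℝ))
        (2 • innerSL ℝ y) y := (hasStrictFDerivAt_norm_sq y).hasFDerivAt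
    have h2 : HasDerivAt (fun t : ℝ => t ^ e) (e * s ^ (e - 1)) s :=
      Real.hasDerivAt_rpow_const (Or.inl hspos.ne')
    exact h2.comp_hasFDerivAt y h1
  have hc' : HasFDerivAt c (d • innerSL ℝ y) y := by
    have h := (hg.const_mul C).const_sub a
    refine h.congr_fderiv ?_
    ext v
    simp only [ContinuousLinearMap.smul_apply, ContinuousLinearMap.neg_apply, hd,
      smul_eq_mul]
    ring
  set f₀ : EuclideanSpace ℝ (Fin (k + 1)) → EuclideanSpace ℝ (Fin (k + 1)) :=
    fun x => c x • x with hf₀def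
  set L : EuclideanSpace ℝ (Fin (k + 1)) →L[ℝ] EuclideanSpace ℝ (Fin (k + 1)) :=
    c y • ContinuousLinearMap.id ℝ _ + (d • innerSL ℝ y).smulRight y with hL
  have hf0 : HasFDerivAt f₀ L y := hc'.smul (hasFDerivAt_id y)
  -- φ ‖x‖ = c x for x ≠ 0
  have hφc : ∀ x : EuclideanSpace ℝ (Fin (k + 1)), x ≠ 0 → φ ‖x‖ = c x := by
    intro x hx
    have hx0 : (0:ℝ) < ‖x‖ := norm_pos_iff.mpr hx
    have hpow : ((‖x‖ ^ 2 : ℝ)) ^ e = (‖x‖ ^ (k+1))⁻¹ := by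
      rw [← Real.rpow_natCast ‖x‖ 2, ← Real.rpow_mul (norm_nonneg x)]
      rw [show ((2:ℕ):ℝ) * e = -(((k+1:ℕ):ℝ)) by rw [he]; push_cast; ring]
      rw [Real.rpow_neg (norm_nonneg x), Real.rpow_natCast]
    rw [hφ _ hx0, hcdef]
    simp only [hpow]
    rw [ha, hC, div_pow]
    have hxm : (‖x‖:ℝ) ^ (k+1) ≠ 0 := by positivity
    field_simp
  -- χ agrees with Prod.map f₀ id near (y,z)
  have hev : χ =ᶠ[nhds (y, z)]
      Prod.map f₀ (id : EuclideanSpace ℝ (Fin (N - k - 1)) → EuclideanSpace ℝ (Fin (N - k - 1))) := by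
    have hopen : IsOpen {p : EuclideanSpace ℝ (Fin (k + 1)) × EuclideanSpace ℝ (Fin (N - k - 1)) |
        p.1 ≠ 0} := isOpen_compl_singleton.preimage continuous_fst
    have hmem : {p : EuclideanSpace ℝ (Fin (k + 1)) × EuclideanSpace ℝ (Fin (N - k - 1)) |
        p.1 ≠ 0} ∈ nhds (y, z) := hopen.mem_nhds (by exact hy)
    filter_upwards [hmem] with p hp
    have h1 := hχ p.1 p.2 hp
    rw [show (p.1, p.2) = p from rfl] at h1
    rw [h1]
    show _ = (f₀ p.1, p.2)
    rw [hf₀def, hφc p.1 hp]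
  have hchi : HasFDerivAt χ (L.prodMap (ContinuousLinearMap.id ℝ _)) (y, z) := by
    have h1 : HasFDerivAt (Prod.map f₀ (id : EuclideanSpace ℝ (Fin (N - k - 1)) →
        EuclideanSpace ℝ (Fin (N - k - 1))))
        (L.prodMap (ContinuousLinearMap.id ℝ _)) (y, z) :=
      HasFDerivAt.prodMap (p := (y, z)) hf0 (hasFDerivAt_id z)
    exact h1.congr_of_eventuallyEq hev
  refine ⟨hchi.differentiableAt, ?_⟩
  rw [hchi.fderiv, ContinuousLinearMap.coe_prodMap, LinearMap.trace_prodMap']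
  -- trace of L
  have htrL : LinearMap.trace ℝ (EuclideanSpace ℝ (Fin (k + 1)))
      (L : EuclideanSpace ℝ (Fin (k + 1)) →ₗ[ℝ] EuclideanSpace ℝ (Fin (k + 1))) = 1 := by
    set b := (EuclideanSpace.basisFun (Fin (k + 1)) ℝ).toBasis with hb
    rw [LinearMap.trace_eq_matrix_trace ℝ b, Matrix.trace]
    have hdiag : ∀ i, (LinearMap.toMatrix b b
        (L : EuclideanSpace ℝ (Fin (k + 1)) →ₗ[ℝ] EuclideanSpace ℝ (Fin (k + 1)))).diag i
        = c y + d * (y i * y i) := by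
      intro i
      rw [Matrix.diag, LinearMap.toMatrix_apply, hb,
        OrthonormalBasis.coe_toBasis, OrthonormalBasis.coe_toBasis_repr_apply,
        EuclideanSpace.basisFun_repr, EuclideanSpace.basisFun_apply]
      simp only [hL, ContinuousLinearMap.coe_coe, ContinuousLinearMap.add_apply,
        ContinuousLinearMap.smul_apply, ContinuousLinearMap.coe_id', id_eq,
        ContinuousLinearMap.smulRight_apply, innerSL_apply_apply]
      rw [EuclideanSpace.inner_single_right]
      simp [EuclideanSpace.single_apply, smul_eq_mul]
      ring
    rw [Finset.sum_congr rfl fun i _ => hdiag i]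
    rw [Finset.sum_add_distrib, Finset.sum_const, ← Finset.mul_sum]
    have hsum : ∑ i : Fin (k + 1), y i * y i = s := by
      have h2 := @real_inner_self_eq_norm_sq (EuclideanSpace ℝ (Fin (k + 1))) _ _ y
      rw [hs, ← h2, PiLp.inner_apply]
      simp [RCLike.inner_apply, sq]
    rw [hsum, Finset.card_univ, nsmul_eq_mul,
      show ((Fintype.card (Fin (k+1)) : ℝ)) = (k:ℝ) + 1 by simp]
    have hse : d * s = -(2 * C * e) * s ^ e := by
      rw [hd, Real.rpow_sub hspos, Real.rpow_one]
      field_simp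
    rw [hse, hcdef]
    have hkey : ((k:ℝ)+1) * (a - C * s ^ e) + -(2 * C * e) * s ^ e
        = ((k:ℝ)+1) * a - C * s ^ e * (((k:ℝ)+1) + 2 * e) := by ring
    rw [hkey, show ((k:ℝ)+1) + 2 * e = 0 by rw [he]; ring, ha]
    field_simp
    simp
  rw [htrL, ContinuousLinearMap.coe_id, LinearMap.trace_id]
  have hfr : (Module.finrank ℝ (EuclideanSpace ℝ (Fin (N - k - 1))) : ℝ)
      = (N : ℝ) - (k : ℝ) - 1 := by
    rw [finrank_euclideanSpace, Fintype.card_fin, Nat.sub_sub, Nat.cast_sub (by omega)]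
    push_cast; ring
  rw [hfr]; ring
end

section
/- Let k, N be integers with 0 ≤ k ≤ N−2 and let τ > 0. Define φ(t) = (1/(k+1))·(1 − (τ/t)^{k+1}) for t > 0, and define the vector field χ_τ(y,z) := (φ(|y|)·y, z) for y ∈ ℝ^{k+1} with y ≠ 0 and z ∈ ℝ^{N−k−1}. Then for every (y,z) with y ≠ 0 and every ξ ∈ ℝ^N one has ⟨dχ_τ(y,z)[ξ], ξ⟩ ≤ max{1 − k·φ(|y|), 1}·|ξ|², where dχ_τ(y,z) is the total derivative of χ_τ at (y,z). -/
open scoped RealInnerProductSpace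

theorem stmt2_aux {E Z : Type*} [NormedAddCommGroup E] [InnerProductSpace ℝ E]
    [NormedAddCommGroup Z] [InnerProductSpace ℝ Z]
    (k : ℕ) (τ : ℝ) (hτ : 0 < τ) (φ : ℝ → ℝ)
    (hφ : ∀ t : ℝ, 0 < t → φ t = (1 / ((k : ℝ) + 1)) * (1 - (τ / t) ^ (k + 1)))
    (χ : WithLp 2 (E × Z) → WithLp 2 (E × Z))
    (hχ : ∀ (y : E) (z : Z), y ≠ 0 →
      χ ((WithLp.equiv 2 _).symm (y, z)) = (WithLp.equiv 2 _).symm (φ ‖y‖ • y, z))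
    (y : E) (z : Z) (hy : y ≠ 0) :
    DifferentiableAt ℝ χ ((WithLp.equiv 2 _).symm (y, z)) ∧
      ∀ ξ : WithLp 2 (E × Z),
        ⟪fderiv ℝ χ ((WithLp.equiv 2 _).symm (y, z)) ξ, ξ⟫ ≤
          max (1 - (k : ℝ) * φ ‖y‖) 1 * ‖ξ‖ ^ 2 := by
  classical
  set r : ℝ := ‖y‖ with hrdef
  have hr0 : 0 < r := norm_pos_iff.mpr hy
  set c : ℝ := 1 / ((k : ℝ) + 1) with hc
  set b : ℝ := τ ^ (k + 1) / r ^ (k + 2) with hb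
  have hb0 : 0 ≤ b := by positivity
  -- derivative of the norm at y
  have hnorm : HasFDerivAt (fun w : E => ‖w‖) (r⁻¹ • innerSL ℝ y) y := by
    have h1 : HasFDerivAt (fun w : E => ‖w‖ ^ 2) (2 • innerSL ℝ y) y :=
      (hasStrictFDerivAt_norm_sq y).hasFDerivAt
    have h2 := (Real.hasDerivAt_sqrt (by positivity : (‖y‖ ^ 2 : ℝ) ≠ 0)).comp_hasFDerivAt y h1
    have h3 : HasFDerivAt (fun w : E => ‖w‖)
        ((1 / (2 * Real.sqrt (‖y‖ ^ 2))) • (2 • innerSL ℝ y)) y :=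
      h2.congr_of_eventuallyEq (Filter.Eventually.of_forall fun w =>
        (Real.sqrt_sq (norm_nonneg w)).symm)
    convert h3 using 1
    rw [Real.sqrt_sq (norm_nonneg y)]
    ext w
    simp only [ContinuousLinearMap.smul_apply, smul_eq_mul, two_smul,
      ContinuousLinearMap.add_apply, ← hrdef]
    field_simp
    ring
  -- derivative of φ at r
  have hφ' : HasDerivAt φ b r := by
    have hψ : HasDerivAt (fun t : ℝ => c * (1 - τ ^ (k + 1) * (t ^ (k + 1))⁻¹)) b r := by
      have h1 := ((hasDerivAt_pow (k + 1) r).inv (by positivity)).const_mul (τ ^ (k + 1))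
      have h2 := ((hasDerivAt_const r (1 : ℝ)).sub h1).const_mul c
      refine h2.congr_deriv ?_
      rw [hb, hc]
      push_cast
      field_simp
      ring
    refine hψ.congr_of_eventuallyEq ?_
    filter_upwards [Ioi_mem_nhds hr0] with t ht
    rw [hφ t ht, div_pow, div_eq_mul_inv]
  -- derivative of w ↦ φ ‖w‖
  set L : E →L[ℝ] ℝ := (b / r) • innerSL ℝ y with hL
  have hg : HasFDerivAt (fun w : E => φ ‖w‖) L y := by
    have h := hφ'.comp_hasFDerivAt y hnorm
    have h2 : HasFDerivAt (fun w : E => φ ‖w‖) (b • (r⁻¹ • innerSL ℝ y)) y := by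
      exact h
    convert h2 using 1
    rw [hL, smul_smul, div_eq_mul_inv]
  -- derivative of f : w ↦ φ ‖w‖ • w
  set D₁ : E →L[ℝ] E := φ r • ContinuousLinearMap.id ℝ E + L.smulRight y with hD₁
  have hf : HasFDerivAt (fun w : E => φ ‖w‖ • w) D₁ y := hg.smul (hasFDerivAt_id y)
  -- full map
  set eL : WithLp 2 (E × Z) ≃L[ℝ] E × Z := WithLp.prodContinuousLinearEquiv 2 ℝ E Z with heL
  set x₀ : WithLp 2 (E × Z) := (WithLp.equiv 2 _).symm (y, z) with hx₀
  set D : WithLp 2 (E × Z) →L[ℝ] WithLp 2 (E × Z) :=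
    ((eL.symm : E × Z →L[ℝ] WithLp 2 (E × Z)).comp
      ((D₁.prodMap (ContinuousLinearMap.id ℝ Z)).comp (eL : WithLp 2 (E × Z) →L[ℝ] E × Z)))
    with hD
  have heLx₀ : eL x₀ = (y, z) := rfl
  have hFmid : HasFDerivAt (fun p : E × Z => (φ ‖p.1‖ • p.1, p.2))
      (D₁.prodMap (ContinuousLinearMap.id ℝ Z)) (y, z) :=
    HasFDerivAt.prodMap (y, z) hf (hasFDerivAt_id z)
  have hF : HasFDerivAt
      (fun p : WithLp 2 (E × Z) => eL.symm (φ ‖(eL p).1‖ • (eL p).1, (eL p).2)) D x₀ := by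
    have h1 : HasFDerivAt (fun p : WithLp 2 (E × Z) => (φ ‖(eL p).1‖ • (eL p).1, (eL p).2))
        ((D₁.prodMap (ContinuousLinearMap.id ℝ Z)).comp (eL : WithLp 2 (E × Z) →L[ℝ] E × Z))
        x₀ := by
      have := hFmid.comp x₀ (eL.hasFDerivAt (x := x₀))
      simpa [Function.comp_def, heLx₀] using this
    have := (eL.symm.hasFDerivAt (x := (φ ‖(eL x₀).1‖ • (eL x₀).1, (eL x₀).2))).comp x₀ h1
    simpa [Function.comp_def, hD] using this
  have hev : χ =ᶠ[nhds x₀]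
      fun p : WithLp 2 (E × Z) => eL.symm (φ ‖(eL p).1‖ • (eL p).1, (eL p).2) := by
    have hopen : IsOpen {p : WithLp 2 (E × Z) | (eL p).1 ≠ 0} :=
      isOpen_ne.preimage (continuous_fst.comp eL.continuous)
    have hx₀mem : x₀ ∈ {p : WithLp 2 (E × Z) | (eL p).1 ≠ 0} := by
      show (eL x₀).1 ≠ 0
      rw [heLx₀]
      exact hy
    filter_upwards [hopen.mem_nhds hx₀mem] with p hp
    have h := hχ (eL p).1 (eL p).2 hp
    have hpe : (WithLp.equiv 2 (E × Z)).symm ((eL p).1, (eL p).2) = p := rfl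
    rw [hpe] at h
    rw [h]
    rfl
  have hχD : HasFDerivAt χ D x₀ := hF.congr_of_eventuallyEq hev
  refine ⟨hχD.differentiableAt, ?_⟩
  intro ξ
  rw [hχD.fderiv]
  -- compute the inner product
  set η : E := (eL ξ).1 with hη
  set ζ : Z := (eL ξ).2 with hζ
  have hDξ : D ξ = (WithLp.equiv 2 (E × Z)).symm (D₁ η, ζ) := rfl
  have hinner : ⟪D ξ, ξ⟫ = ⟪D₁ η, η⟫ + ⟪ζ, ζ⟫ := by
    rw [hDξ, WithLp.prod_inner_apply]
    rfl
  have hD₁η : ⟪D₁ η, η⟫ = φ r * ⟪η, η⟫ + (b / r) * (⟪y, η⟫ * ⟪y, η⟫) := by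
    rw [hD₁]
    simp only [ContinuousLinearMap.add_apply, ContinuousLinearMap.smul_apply,
      ContinuousLinearMap.id_apply, ContinuousLinearMap.smulRight_apply, hL,
      inner_add_left, real_inner_smul_left, smul_eq_mul, innerSL_apply_apply]
    ring
  have hCS : ⟪y, η⟫ * ⟪y, η⟫ ≤ (r * r) * ⟪η, η⟫ := by
    have h := real_inner_mul_inner_self_le y η
    have : ⟪y, y⟫ = r * r := by
      rw [real_inner_self_eq_norm_sq, ← hrdef]; ring
    rw [this] at h
    exact h
  have hkey : φ r + b * r = 1 - (k : ℝ) * φ r := by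
    rw [hφ r hr0, hb, div_pow, hc]
    have hrne : r ≠ 0 := ne_of_gt hr0
    have hk1 : ((k : ℝ) + 1) ≠ 0 := by positivity
    have hk1' : (1 : ℝ) + (k : ℝ) ≠ 0 := by positivity
    field_simp
    ring
  have hM0 : (0 : ℝ) ≤ max (1 - (k : ℝ) * φ r) 1 := le_trans zero_le_one (le_max_right _ _)
  have hηnn : (0 : ℝ) ≤ ⟪η, η⟫ := real_inner_self_nonneg
  have hζnn : (0 : ℝ) ≤ ⟪ζ, ζ⟫ := real_inner_self_nonneg
  calc ⟪D ξ, ξ⟫ = φ r * ⟪η, η⟫ + (b / r) * (⟪y, η⟫ * ⟪y, η⟫) + ⟪ζ, ζ⟫ := by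
        rw [hinner, hD₁η]
    _ ≤ φ r * ⟪η, η⟫ + (b / r) * ((r * r) * ⟪η, η⟫) + ⟪ζ, ζ⟫ := by
        have hbr : (0 : ℝ) ≤ b / r := div_nonneg hb0 hr0.le
        gcongr
    _ = (φ r + b * r) * ⟪η, η⟫ + ⟪ζ, ζ⟫ := by
        have hrne : r ≠ 0 := ne_of_gt hr0
        field_simp
    _ = (1 - (k : ℝ) * φ r) * ⟪η, η⟫ + 1 * ⟪ζ, ζ⟫ := by rw [hkey]; ring
    _ ≤ max (1 - (k : ℝ) * φ r) 1 * ⟪η, η⟫ + max (1 - (k : ℝ) * φ r) 1 * ⟪ζ, ζ⟫ := by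
        exact add_le_add (mul_le_mul_of_nonneg_right (le_max_left _ _) hηnn)
          (mul_le_mul_of_nonneg_right (le_max_right _ _) hζnn)
    _ = max (1 - (k : ℝ) * φ r) 1 * ‖ξ‖ ^ 2 := by
        rw [real_inner_self_eq_norm_sq, real_inner_self_eq_norm_sq,
          WithLp.prod_norm_sq_eq_of_L2]
        have h1 : η = ξ.fst := rfl
        have h2 : ζ = ξ.snd := rfl
        rw [h1, h2]
        ring

/-- With `χ_τ(y,z) = (φ(|y|)·y, z)` as above, viewed on the Euclidean space
`ℝ^N = ℝ^{k+1} × ℝ^{N−k−1}` (the `ℓ²`-product), for every `(y,z)` with `y ≠ 0` and every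
`ξ ∈ ℝ^N` one has `⟨dχ_τ(y,z)[ξ], ξ⟩ ≤ max{1 − k·φ(|y|), 1}·|ξ|²`. -/
theorem stmt_2 (k N : ℕ) (hk : k + 2 ≤ N) (τ : ℝ) (hτ : 0 < τ)
    (φ : ℝ → ℝ)
    (hφ : ∀ t : ℝ, 0 < t → φ t = (1 / ((k : ℝ) + 1)) * (1 - (τ / t) ^ (k + 1)))
    (χ : WithLp 2 (EuclideanSpace ℝ (Fin (k + 1)) × EuclideanSpace ℝ (Fin (N - k - 1))) →
         WithLp 2 (EuclideanSpace ℝ (Fin (k + 1)) × EuclideanSpace ℝ (Fin (N - k - 1))))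
    (hχ : ∀ (y : EuclideanSpace ℝ (Fin (k + 1))) (z : EuclideanSpace ℝ (Fin (N - k - 1))),
      y ≠ 0 →
      χ ((WithLp.equiv 2 _).symm (y, z)) = (WithLp.equiv 2 _).symm (φ ‖y‖ • y, z)) :
    ∀ (y : EuclideanSpace ℝ (Fin (k + 1))) (z : EuclideanSpace ℝ (Fin (N - k - 1))),
      y ≠ 0 →
      DifferentiableAt ℝ χ ((WithLp.equiv 2 _).symm (y, z)) ∧
      ∀ ξ : WithLp 2 (EuclideanSpace ℝ (Fin (k + 1)) × EuclideanSpace ℝ (Fin (N - k - 1))),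
        ⟪fderiv ℝ χ ((WithLp.equiv 2 _).symm (y, z)) ξ, ξ⟫ ≤
          max (1 - (k : ℝ) * φ ‖y‖) 1 * ‖ξ‖ ^ 2 := fun y z hy =>
  stmt2_aux k τ hτ φ hφ χ hχ y z hy
end

section
/- Let n ≥ 1 and k ≥ 0 be integers and set N := n + k. Let U be an open subset of (0,∞) × ℝ^{n−1} and let u : U → ℝ be twice continuously differentiable. Define Ω := {(y,z) ∈ ℝ^{k+1} × ℝ^{n−1} : (|y|, z) ∈ U} and v(y,z) := u(|y|, z) for (y,z) ∈ Ω. Then v is twice continuously differentiable on Ω and for every (y,z) ∈ Ω (note y ≠ 0) one has Δv(y,z) = Δu(|y|,z) + (k/|y|)·∂₁u(|y|,z); equivalently, Δv(y,z) = |y|^{−k}·div(x₁^k ∇u)(|y|,z), where div(x₁^k ∇u)(x) = Σ_{i=1}^{n} ∂/∂x_i ( x₁^k ∂u/∂x_i )(x). -/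
noncomputable section

open ContinuousLinearMap

variable {E' F' : Type*} [NormedAddCommGroup E'] [InnerProductSpace ℝ E']
  [NormedAddCommGroup F'] [NormedSpace ℝ F']

lemma hasFDerivAt_norm_ip {y : E'} (hy : y ≠ 0) :
    HasFDerivAt (fun x : E' => ‖x‖) (‖y‖⁻¹ • (innerSL ℝ y)) y := by
  have hiy : (inner ℝ y y : ℝ) ≠ 0 := by
    simpa [inner_self_eq_zero] using hy
  have h1 : HasFDerivAt (fun x : E' => (inner ℝ x x : ℝ))
      ((fderivInnerCLM ℝ ((id y : E'), (id y : E'))).comp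
        ((ContinuousLinearMap.id ℝ E').prod (ContinuousLinearMap.id ℝ E'))) y :=
    (hasFDerivAt_id y).inner ℝ (hasFDerivAt_id y)
  have h2 := h1.sqrt hiy
  have hfun : (fun x : E' => Real.sqrt (inner ℝ x x : ℝ)) = fun x : E' => ‖x‖ := by
    funext x
    rw [real_inner_self_eq_norm_mul_norm, Real.sqrt_mul_self (norm_nonneg x)]
  rw [hfun] at h2
  have hsq : Real.sqrt (inner ℝ y y : ℝ) = ‖y‖ := by
    rw [real_inner_self_eq_norm_mul_norm, Real.sqrt_mul_self (norm_nonneg y)]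
  convert h2 using 1
  ext w
  have hne : ‖y‖ ≠ 0 := norm_ne_zero_iff.mpr hy
  simp only [ContinuousLinearMap.smul_apply, ContinuousLinearMap.comp_apply,
    ContinuousLinearMap.prod_apply, ContinuousLinearMap.coe_id', _root_.id,
    fderivInnerCLM_apply, innerSL_apply_apply, hsq, smul_eq_mul]
  rw [real_inner_comm w y]
  field_simp
  ring

def dPhi (y : E') : (E' × F') →L[ℝ] (ℝ × F') :=
  ((‖y‖⁻¹ • (innerSL ℝ y)).comp (ContinuousLinearMap.fst ℝ E' F')).prod
    (ContinuousLinearMap.snd ℝ E' F')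

@[simp] lemma dPhi_apply (y : E') (w : E' × F') :
    dPhi y w = (‖y‖⁻¹ * (inner ℝ y w.1 : ℝ), w.2) := by
  simp [dPhi]

lemma hasFDerivAt_phi {q : E' × F'} (hq : q.1 ≠ 0) :
    HasFDerivAt (fun q' : E' × F' => ((‖q'.1‖, q'.2) : ℝ × F')) (dPhi q.1) q :=
  ((hasFDerivAt_norm_ip hq).comp q hasFDerivAt_fst).prodMk hasFDerivAt_snd


/-- The Laplacian (sum of second partial derivatives with respect to the standard
coordinates) of a function on `ℝ × ℝ^{n−1}`. -/
def lapU (n : ℕ) (u : ℝ × EuclideanSpace ℝ (Fin (n - 1)) → ℝ)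
    (x : ℝ × EuclideanSpace ℝ (Fin (n - 1))) : ℝ :=
  fderiv ℝ (fun x' => fderiv ℝ u x' (1, 0)) x (1, 0) +
    ∑ j : Fin (n - 1),
      fderiv ℝ (fun x' => fderiv ℝ u x' (0, EuclideanSpace.single j 1)) x
        (0, EuclideanSpace.single j 1)

/-- The Laplacian (sum of second partial derivatives with respect to the standard
coordinates) of a function on `ℝ^{k+1} × ℝ^{n−1}`. -/
def lapV (n k : ℕ) (v : EuclideanSpace ℝ (Fin (k + 1)) × EuclideanSpace ℝ (Fin (n - 1)) → ℝ)
    (q : EuclideanSpace ℝ (Fin (k + 1)) × EuclideanSpace ℝ (Fin (n - 1))) : ℝ :=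
  (∑ i : Fin (k + 1),
      fderiv ℝ (fun q' => fderiv ℝ v q' (EuclideanSpace.single i 1, 0)) q
        (EuclideanSpace.single i 1, 0)) +
    ∑ j : Fin (n - 1),
      fderiv ℝ (fun q' => fderiv ℝ v q' (0, EuclideanSpace.single j 1)) q
        (0, EuclideanSpace.single j 1)

/-- `div(x₁^k ∇u)(x) = Σ_{i=1}^{n} ∂/∂x_i ( x₁^k ∂u/∂x_i )(x)` for a function `u` on
`ℝ × ℝ^{n−1}`. -/
def divW (n k : ℕ) (u : ℝ × EuclideanSpace ℝ (Fin (n - 1)) → ℝ)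
    (x : ℝ × EuclideanSpace ℝ (Fin (n - 1))) : ℝ :=
  fderiv ℝ (fun x' => x'.1 ^ k * fderiv ℝ u x' (1, 0)) x (1, 0) +
    ∑ j : Fin (n - 1),
      fderiv ℝ (fun x' => x'.1 ^ k * fderiv ℝ u x' (0, EuclideanSpace.single j 1)) x
        (0, EuclideanSpace.single j 1)

/-- if `u : U → ℝ` is `C²` on an open `U ⊆ (0,∞) × ℝ^{n−1}`,
`Ω = {(y,z) : (|y|,z) ∈ U}` and `v(y,z) = u(|y|,z)`, then `v` is `C²` on `Ω` and
`Δv(y,z) = Δu(|y|,z) + (k/|y|)·∂₁u(|y|,z) = |y|^{−k}·div(x₁^k ∇u)(|y|,z)` on `Ω`. -/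
theorem stmt_3 (n k : ℕ) (hn : 1 ≤ n)
    (U : Set (ℝ × EuclideanSpace ℝ (Fin (n - 1)))) (hUopen : IsOpen U)
    (hUpos : ∀ x ∈ U, 0 < x.1)
    (u : ℝ × EuclideanSpace ℝ (Fin (n - 1)) → ℝ) (hu : ContDiffOn ℝ 2 u U)
    (Ω : Set (EuclideanSpace ℝ (Fin (k + 1)) × EuclideanSpace ℝ (Fin (n - 1))))
    (hΩ : Ω = {p | (‖p.1‖, p.2) ∈ U})
    (v : EuclideanSpace ℝ (Fin (k + 1)) × EuclideanSpace ℝ (Fin (n - 1)) → ℝ)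
    (hv : ∀ p, v p = u (‖p.1‖, p.2)) :
    ContDiffOn ℝ 2 v Ω ∧
    ∀ p ∈ Ω,
      lapV n k v p =
          lapU n u (‖p.1‖, p.2) + ((k : ℝ) / ‖p.1‖) * fderiv ℝ u (‖p.1‖, p.2) (1, 0) ∧
      lapV n k v p = (‖p.1‖ ^ k)⁻¹ * divW n k u (‖p.1‖, p.2) := by
  have hveq : v = fun q : EuclideanSpace ℝ (Fin (k + 1)) × EuclideanSpace ℝ (Fin (n - 1)) =>
      u (‖q.1‖, q.2) := funext hv
  have hmemU : ∀ q ∈ Ω, ((‖q.1‖ : ℝ), q.2) ∈ U := by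
    intro q hq; rw [hΩ] at hq; exact hq
  have hq1 : ∀ q ∈ Ω, q.1 ≠ 0 := by
    intro q hq
    have := hUpos _ (hmemU q hq)
    simpa [norm_pos_iff] using this
  have hΩopen : IsOpen Ω := by
    rw [hΩ]
    exact hUopen.preimage ((continuous_fst.norm).prodMk continuous_snd)
  -- differentiability facts about u
  have hu1 : ∀ x' ∈ U, DifferentiableAt ℝ u x' := fun x' hx' =>
    (hu.differentiableOn (by norm_num)).differentiableAt (hUopen.mem_nhds hx')
  have hDu : ContDiffOn ℝ 1 (fderiv ℝ u) U := hu.fderiv_of_isOpen hUopen (by norm_num)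
  have hDud : ∀ x' ∈ U, DifferentiableAt ℝ (fderiv ℝ u) x' := fun x' hx' =>
    (hDu.differentiableOn (by norm_num)).differentiableAt (hUopen.mem_nhds hx')
  have hPd : ∀ x' ∈ U, ∀ d : ℝ × EuclideanSpace ℝ (Fin (n - 1)), HasFDerivAt (fun y => fderiv ℝ u y d)
      ((fderiv ℝ (fderiv ℝ u) x').flip d) x' := by
    intro x' hx' d
    have h := (hDud x' hx').hasFDerivAt.clm_apply (hasFDerivAt_const d x')
    simpa using h
  -- smoothness of v
  have hsmooth : ContDiffOn ℝ 2 v Ω := by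
    rw [hveq]
    intro q hq
    have hφ : ContDiffWithinAt ℝ 2 (fun q' : EuclideanSpace ℝ (Fin (k + 1)) × EuclideanSpace ℝ (Fin (n - 1)) => ((‖q'.1‖, q'.2) : ℝ × EuclideanSpace ℝ (Fin (n - 1)))) Ω q := by
      exact (((contDiffAt_norm ℝ (hq1 q hq)).comp q contDiffAt_fst).prodMk
        contDiffAt_snd).contDiffWithinAt
    exact (hu _ (hmemU q hq)).comp q hφ (fun q' hq' => hmemU q' hq')
  refine ⟨hsmooth, fun p hp => ?_⟩
  have hp1 : p.1 ≠ 0 := hq1 p hp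
  have hr : (0 : ℝ) < ‖p.1‖ := norm_pos_iff.mpr hp1
  have hrne : (‖p.1‖ : ℝ) ≠ 0 := hr.ne'
  have hx : ((‖p.1‖ : ℝ), p.2) ∈ U := hmemU p hp
  -- derivative of v
  have hvq : ∀ q ∈ Ω, HasFDerivAt v
      ((fderiv ℝ u ((‖q.1‖ : ℝ), q.2)).comp (dPhi q.1)) q := by
    intro q hq
    rw [hveq]
    exact (hu1 _ (hmemU q hq)).hasFDerivAt.comp q (hasFDerivAt_phi (hq1 q hq))
  have hsmul0 : ∀ t : ℝ, ((t, (0 : EuclideanSpace ℝ (Fin (n - 1)))) : ℝ × EuclideanSpace ℝ (Fin (n - 1))) = t • ((1 : ℝ), (0 : EuclideanSpace ℝ (Fin (n - 1)))) := by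
    intro t; rw [Prod.smul_mk, smul_eq_mul, mul_one, smul_zero]
  have hdir : ∀ (L : (ℝ × EuclideanSpace ℝ (Fin (n - 1))) →L[ℝ] ℝ) (t : ℝ), L (t, (0 : EuclideanSpace ℝ (Fin (n - 1)))) = t * L (1, 0) := by
    intro L t; rw [hsmul0 t, map_smul, smul_eq_mul]
  -- first-order directional values of v on Ω
  have hvF : ∀ q ∈ Ω, ∀ i : Fin (k + 1),
      fderiv ℝ v q (EuclideanSpace.single i 1, 0) =
        (‖q.1‖⁻¹ * q.1 i) * fderiv ℝ u ((‖q.1‖ : ℝ), q.2) (1, 0) := by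
    intro q hq i
    rw [(hvq q hq).fderiv]
    have hin : (inner ℝ q.1 (EuclideanSpace.single i (1:ℝ)) : ℝ) = q.1 i := by
      simp [EuclideanSpace.inner_single_right]
    simp only [ContinuousLinearMap.comp_apply, dPhi_apply, hin]
    rw [hdir]
  have hvG : ∀ q ∈ Ω, ∀ j : Fin (n - 1),
      fderiv ℝ v q ((0 : EuclideanSpace ℝ (Fin (k + 1))), EuclideanSpace.single j 1) =
        fderiv ℝ u ((‖q.1‖ : ℝ), q.2) (0, EuclideanSpace.single j 1) := by
    intro q hq j
    rw [(hvq q hq).fderiv]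
    simp
  set f' := fderiv ℝ (fderiv ℝ u) ((‖p.1‖ : ℝ), p.2) with hf'def
  have hf'dir : ∀ (t : ℝ) (d : ℝ × EuclideanSpace ℝ (Fin (n - 1))),
      f' ((t : ℝ), (0 : EuclideanSpace ℝ (Fin (n - 1)))) d = t * (f' (1, 0) d) := by
    intro t d
    rw [hsmul0 t, map_smul]
    simp
  -- key second-derivative computation in the radial directions
  have keyI : ∀ i : Fin (k + 1),
      fderiv ℝ (fun q' => fderiv ℝ v q' (EuclideanSpace.single i 1, 0)) p
          (EuclideanSpace.single i 1, 0) =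
        (p.1 i * p.1 i) * ((‖p.1‖⁻¹ * ‖p.1‖⁻¹) * f' (1, 0) (1, 0)
            - ((‖p.1‖ ^ 2)⁻¹ * ‖p.1‖⁻¹) * fderiv ℝ u ((‖p.1‖ : ℝ), p.2) (1, 0))
          + ‖p.1‖⁻¹ * fderiv ℝ u ((‖p.1‖ : ℝ), p.2) (1, 0) := by
    intro i
    have hEq : (fun q' => fderiv ℝ v q' (EuclideanSpace.single i 1, 0)) =ᶠ[nhds p]
        (fun q' => (‖q'.1‖⁻¹ * q'.1 i) * fderiv ℝ u ((‖q'.1‖ : ℝ), q'.2) (1, 0)) :=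
      Filter.eventuallyEq_of_mem (hΩopen.mem_nhds hp) (fun q hq => hvF q hq i)
    rw [hEq.fderiv_eq]
    have ha : HasFDerivAt
        (fun q' : EuclideanSpace ℝ (Fin (k + 1)) × EuclideanSpace ℝ (Fin (n - 1)) => ‖q'.1‖⁻¹)
        ((-(‖p.1‖ ^ 2)⁻¹) • ((‖p.1‖⁻¹ • (innerSL ℝ p.1)).comp
          (ContinuousLinearMap.fst ℝ (EuclideanSpace ℝ (Fin (k + 1)))
            (EuclideanSpace ℝ (Fin (n - 1)))))) p :=
      (hasDerivAt_inv hrne).comp_hasFDerivAt p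
        ((hasFDerivAt_norm_ip hp1).comp p hasFDerivAt_fst)
    have hb : HasFDerivAt
        (fun q' : EuclideanSpace ℝ (Fin (k + 1)) × EuclideanSpace ℝ (Fin (n - 1)) => q'.1 i)
        ((EuclideanSpace.proj i).comp (ContinuousLinearMap.fst ℝ
          (EuclideanSpace ℝ (Fin (k + 1))) (EuclideanSpace ℝ (Fin (n - 1))))) p :=
      ((EuclideanSpace.proj i).comp (ContinuousLinearMap.fst ℝ
        (EuclideanSpace ℝ (Fin (k + 1))) (EuclideanSpace ℝ (Fin (n - 1))))).hasFDerivAt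
    have hc : HasFDerivAt
        (fun q' : EuclideanSpace ℝ (Fin (k + 1)) × EuclideanSpace ℝ (Fin (n - 1)) =>
          fderiv ℝ u ((‖q'.1‖ : ℝ), q'.2) (1, 0))
        ((f'.flip (1, 0)).comp (dPhi p.1)) p :=
      by have h := (hPd _ hx (1, 0)).comp p (hasFDerivAt_phi hp1); exact h
    have hG := (ha.fun_mul hb).fun_mul hc
    rw [hG.fderiv]
    have hin : (inner ℝ p.1 (EuclideanSpace.single i (1 : ℝ)) : ℝ) = p.1 i := by
      simp [EuclideanSpace.inner_single_right]
    simp only [ContinuousLinearMap.add_apply, ContinuousLinearMap.smul_apply,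
      ContinuousLinearMap.comp_apply, ContinuousLinearMap.coe_fst',
      ContinuousLinearMap.flip_apply, dPhi_apply, innerSL_apply_apply, smul_eq_mul, hin,
      EuclideanSpace.single_apply, if_pos rfl]
    rw [hf'dir]
    have hproj : (EuclideanSpace.proj i) (EuclideanSpace.single i (1 : ℝ)) = 1 := by
      simp [EuclideanSpace.single_apply]
    rw [hproj]
    ring
  have keyJ : ∀ j : Fin (n - 1),
      fderiv ℝ (fun q' => fderiv ℝ v q' (0, EuclideanSpace.single j 1)) p
          (0, EuclideanSpace.single j 1) =
        f' (0, EuclideanSpace.single j 1) (0, EuclideanSpace.single j 1) := by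
    intro j
    have hEq : (fun q' => fderiv ℝ v q' (0, EuclideanSpace.single j 1)) =ᶠ[nhds p]
        (fun q' => fderiv ℝ u ((‖q'.1‖ : ℝ), q'.2) (0, EuclideanSpace.single j 1)) :=
      Filter.eventuallyEq_of_mem (hΩopen.mem_nhds hp) (fun q hq => hvG q hq j)
    rw [hEq.fderiv_eq]
    have hc : HasFDerivAt
        (fun q' : EuclideanSpace ℝ (Fin (k + 1)) × EuclideanSpace ℝ (Fin (n - 1)) =>
          fderiv ℝ u ((‖q'.1‖ : ℝ), q'.2) (0, EuclideanSpace.single j 1))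
        ((f'.flip (0, EuclideanSpace.single j 1)).comp (dPhi p.1)) p :=
      by have h := (hPd _ hx (0, EuclideanSpace.single j 1)).comp p (hasFDerivAt_phi hp1); exact h
    rw [hc.fderiv]
    simp
  -- second derivatives of u itself
  have hA : fderiv ℝ (fun x' => fderiv ℝ u x' (1, 0)) ((‖p.1‖ : ℝ), p.2) (1, 0) =
      f' (1, 0) (1, 0) := by
    rw [(hPd _ hx (1, 0)).fderiv]; rfl
  have hAj : ∀ j : Fin (n - 1),
      fderiv ℝ (fun x' => fderiv ℝ u x' (0, EuclideanSpace.single j 1)) ((‖p.1‖ : ℝ), p.2)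
          (0, EuclideanSpace.single j 1) =
        f' (0, EuclideanSpace.single j 1) (0, EuclideanSpace.single j 1) := by
    intro j
    rw [(hPd _ hx _).fderiv]; rfl
  have hS : (∑ i : Fin (k + 1), p.1 i * p.1 i) = ‖p.1‖ ^ 2 := by
    have h := real_inner_self_eq_norm_sq p.1
    rw [PiLp.inner_apply] at h
    simpa [sq] using h
  -- value of lapV
  have hlapV : lapV n k v p =
      f' (1, 0) (1, 0) + ((k : ℝ) / ‖p.1‖) * fderiv ℝ u ((‖p.1‖ : ℝ), p.2) (1, 0) +
        ∑ j : Fin (n - 1),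
          f' (0, EuclideanSpace.single j 1) (0, EuclideanSpace.single j 1) := by
    rw [lapV]
    rw [Finset.sum_congr rfl fun i _ => keyI i, Finset.sum_congr rfl fun j _ => keyJ j]
    rw [Finset.sum_add_distrib, ← Finset.sum_mul, Finset.sum_const, Finset.card_univ,
      Fintype.card_fin, nsmul_eq_mul, hS]
    have h2 : (‖p.1‖ : ℝ) ^ 2 ≠ 0 := pow_ne_zero _ hrne
    push_cast
    field_simp
    ring
  have hlapU : lapU n u ((‖p.1‖ : ℝ), p.2) =
      f' (1, 0) (1, 0) + ∑ j : Fin (n - 1),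
        f' (0, EuclideanSpace.single j 1) (0, EuclideanSpace.single j 1) := by
    rw [lapU, hA, Finset.sum_congr rfl fun j _ => hAj j]
  constructor
  · rw [hlapV, hlapU]; ring
  · -- divergence form
    have hpow : HasFDerivAt
        (fun x' : ℝ × EuclideanSpace ℝ (Fin (n - 1)) => x'.1 ^ k)
        (((k : ℝ) * ‖p.1‖ ^ (k - 1)) • (ContinuousLinearMap.fst ℝ ℝ
          (EuclideanSpace ℝ (Fin (n - 1))))) ((‖p.1‖ : ℝ), p.2) :=
      (hasDerivAt_pow k ‖p.1‖).comp_hasFDerivAt (((‖p.1‖ : ℝ), p.2) : ℝ × EuclideanSpace ℝ (Fin (n - 1))) hasFDerivAt_fst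
    have hW1 : fderiv ℝ (fun x' => x'.1 ^ k * fderiv ℝ u x' (1, 0)) ((‖p.1‖ : ℝ), p.2) (1, 0) =
        ‖p.1‖ ^ k * f' (1, 0) (1, 0) +
          fderiv ℝ u ((‖p.1‖ : ℝ), p.2) (1, 0) * ((k : ℝ) * ‖p.1‖ ^ (k - 1)) := by
      rw [(hpow.fun_mul (hPd _ hx (1, 0))).fderiv]
      simp [ContinuousLinearMap.flip_apply, ← hf'def]
    have hWj : ∀ j : Fin (n - 1),
        fderiv ℝ (fun x' => x'.1 ^ k * fderiv ℝ u x' (0, EuclideanSpace.single j 1))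
            ((‖p.1‖ : ℝ), p.2) (0, EuclideanSpace.single j 1) =
          ‖p.1‖ ^ k * f' (0, EuclideanSpace.single j 1) (0, EuclideanSpace.single j 1) := by
      intro j
      rw [((hpow.fun_mul (hPd _ hx _))).fderiv]
      simp [ContinuousLinearMap.flip_apply, ← hf'def]
    have hdivW : divW n k u ((‖p.1‖ : ℝ), p.2) =
        ‖p.1‖ ^ k * (f' (1, 0) (1, 0) + ∑ j : Fin (n - 1),
            f' (0, EuclideanSpace.single j 1) (0, EuclideanSpace.single j 1)) +
          fderiv ℝ u ((‖p.1‖ : ℝ), p.2) (1, 0) * ((k : ℝ) * ‖p.1‖ ^ (k - 1)) := by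
      rw [divW, hW1, Finset.sum_congr rfl fun j _ => hWj j, ← Finset.mul_sum]
      ring
    have harith : ∀ a c r : ℝ, r ≠ 0 →
        (r ^ k)⁻¹ * (r ^ k * a + c * ((k : ℝ) * r ^ (k - 1))) = a + ((k : ℝ) / r) * c := by
      intro a c r hrne0
      rcases Nat.eq_zero_or_pos k with hk | hk
      · rw [hk]; simp
      · obtain ⟨m, hm⟩ := Nat.exists_eq_succ_of_ne_zero hk.ne'
        rw [hm]
        simp only [Nat.succ_sub_one]
        push_cast
        field_simp
        simp only [Nat.succ_eq_add_one]
        ring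
    rw [hlapV, hdivW, harith _ _ _ hrne]
    ring

end
end

section
/- Let n ≥ 1 and k ≥ 0 be integers, N := n + k, λ ∈ ℝ and p > 2. Let Θ be an open subset of (0,∞) × ℝ^{n−1} and let u : Θ → ℝ be twice continuously differentiable and satisfy −div(x₁^k ∇u)(x) = λ·x₁^k·u(x) + x₁^k·|u(x)|^{p−2}·u(x) for every x ∈ Θ, where div(x₁^k ∇u)(x) = Σ_{i=1}^{n} ∂/∂x_i ( x₁^k ∂u/∂x_i )(x). Define Ω := {(y,z) ∈ ℝ^{k+1} × ℝ^{n−1} : (|y|, z) ∈ Θ} and v(y,z) := u(|y|, z). Then v is twice continuously differentiable on Ω and satisfies −Δv(y,z) = λ·v(y,z) + |v(y,z)|^{p−2}·v(y,z) for every (y,z) ∈ Ω. -/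
noncomputable section

lemma norm_hasFDerivAt {E : Type*} [NormedAddCommGroup E] [InnerProductSpace ℝ E]
    {y : E} (hy : y ≠ 0) : HasFDerivAt (fun w : E => ‖w‖) (‖y‖⁻¹ • innerSL ℝ y) y := by
  have hny : ‖y‖ ≠ 0 := norm_ne_zero_iff.mpr hy
  have h2 : HasFDerivAt (fun w : E => ‖w‖ ^ 2) (2 • innerSL ℝ y) y :=
    (hasStrictFDerivAt_norm_sq y).hasFDerivAt
  have h3 := h2.sqrt (pow_ne_zero 2 hny)
  have hfun : (fun w : E => Real.sqrt (‖w‖ ^ 2)) = fun w : E => ‖w‖ := by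
    funext w; rw [Real.sqrt_sq (norm_nonneg w)]
  rw [hfun] at h3
  convert h3 using 1
  rw [Real.sqrt_sq (norm_nonneg y)]
  ext w
  simp only [ContinuousLinearMap.coe_smul', Pi.smul_apply, smul_eq_mul]
  rw [nsmul_eq_mul]
  field_simp
  ring

/-- if `u` is `C²` on an open `Θ ⊆ (0,∞) × ℝ^{n−1}` and satisfies
`−div(x₁^k ∇u) = λ·x₁^k·u + x₁^k·|u|^{p−2}·u` on `Θ`, then `v(y,z) := u(|y|,z)` is `C²` on
`Ω = {(y,z) : (|y|,z) ∈ Θ}` and satisfies `−Δv = λ·v + |v|^{p−2}·v` on `Ω`. -/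
theorem stmt_4 (n k : ℕ) (hn : 1 ≤ n) (lam p : ℝ) (hp : 2 < p)
    (Θ : Set (ℝ × EuclideanSpace ℝ (Fin (n - 1)))) (hΘopen : IsOpen Θ)
    (hΘpos : ∀ x ∈ Θ, 0 < x.1)
    (u : ℝ × EuclideanSpace ℝ (Fin (n - 1)) → ℝ) (hu : ContDiffOn ℝ 2 u Θ)
    (hpde : ∀ x ∈ Θ,
      -divW n k u x = lam * x.1 ^ k * u x + x.1 ^ k * |u x| ^ (p - 2) * u x)
    (Ω : Set (EuclideanSpace ℝ (Fin (k + 1)) × EuclideanSpace ℝ (Fin (n - 1))))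
    (hΩ : Ω = {q | (‖q.1‖, q.2) ∈ Θ})
    (v : EuclideanSpace ℝ (Fin (k + 1)) × EuclideanSpace ℝ (Fin (n - 1)) → ℝ)
    (hv : ∀ q, v q = u (‖q.1‖, q.2)) :
    ContDiffOn ℝ 2 v Ω ∧
    ∀ q ∈ Ω, -lapV n k v q = lam * v q + |v q| ^ (p - 2) * v q := by
  let E := EuclideanSpace ℝ (Fin (k + 1))
  let F := EuclideanSpace ℝ (Fin (n - 1))
  set Φ : E × F → ℝ × F := fun q => (‖q.1‖, q.2) with hΦdef
  have hvΦ : v = u ∘ Φ := funext fun q => hv q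
  have hΩmem : ∀ q ∈ Ω, Φ q ∈ Θ := by intro q hq; rw [hΩ] at hq; exact hq
  have hΩopen : IsOpen Ω := by
    rw [hΩ]
    exact hΘopen.preimage (continuous_fst.norm.prodMk continuous_snd)
  have hq1ne : ∀ q ∈ Ω, q.1 ≠ 0 := by
    intro q hq
    have h := hΘpos _ (hΩmem q hq)
    exact norm_pos_iff.mp h
  have hΦcd : ∀ q : E × F, q.1 ≠ 0 → ContDiffAt ℝ 2 Φ q := fun q h =>
    ContDiffAt.prodMk ((contDiffAt_norm ℝ h).comp q contDiffAt_fst) contDiffAt_snd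
  have hvC2 : ContDiffOn ℝ 2 v Ω := by
    intro q hq
    have h1 : ContDiffAt ℝ 2 u (Φ q) := hu.contDiffAt (hΘopen.mem_nhds (hΩmem q hq))
    have h2 := h1.comp q (hΦcd q (hq1ne q hq))
    rw [hvΦ]; exact h2.contDiffWithinAt
  refine ⟨hvC2, ?_⟩
  intro q hq
  have hy : q.1 ≠ 0 := hq1ne q hq
  have hr0 : 0 < ‖q.1‖ := hΘpos _ (hΩmem q hq)
  set r : ℝ := ‖q.1‖ with hrdef
  have hrne : r ≠ 0 := hr0.ne'
  -- derivative of Φ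
  set Φ' : (E × F) → (E × F) →L[ℝ] ℝ × F := fun q0 =>
    ((‖q0.1‖⁻¹ • innerSL ℝ q0.1).comp (ContinuousLinearMap.fst ℝ E F)).prod
      (ContinuousLinearMap.snd ℝ E F) with hΦ'def
  have hΦ'at : ∀ q0 : E × F, q0.1 ≠ 0 → HasFDerivAt Φ (Φ' q0) q0 := fun q0 h =>
    HasFDerivAt.prodMk ((norm_hasFDerivAt h).comp q0 (hasFDerivAt_fst)) (hasFDerivAt_snd)
  have hudiff : ∀ x' ∈ Θ, DifferentiableAt ℝ u x' := fun x' hx' =>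
    (hu.contDiffAt (hΘopen.mem_nhds hx')).differentiableAt (by norm_num)
  set x : ℝ × F := Φ q with hxdef
  have hxΘ : x ∈ Θ := hΩmem q hq
  have hu2 : ContDiffAt ℝ 2 u x := hu.contDiffAt (hΘopen.mem_nhds hxΘ)
  have hBd : DifferentiableAt ℝ (fderiv ℝ u) x := by
    have h1 : ContDiffAt ℝ 1 (fderiv ℝ u) x := hu2.fderiv_right (le_refl 2)
    exact h1.differentiableAt one_ne_zero
  set B := fderiv ℝ (fderiv ℝ u) x with hBdef
  have hB : HasFDerivAt (fderiv ℝ u) B x := hBd.hasFDerivAt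
  set A := fderiv ℝ u x with hAdef
  set a : ℝ := A (1, 0) with hadef
  set a1 : ℝ := B (1, 0) (1, 0) with ha1def
  set c : Fin (n - 1) → ℝ :=
    fun j => B (0, EuclideanSpace.single j 1) (0, EuclideanSpace.single j 1) with hcdef
  -- eval maps
  have hEval : ∀ w : ℝ × F, HasFDerivAt (fun x' => fderiv ℝ u x' w)
      ((ContinuousLinearMap.apply ℝ ℝ w).comp B) x :=
    fun w => (ContinuousLinearMap.apply ℝ ℝ w).hasFDerivAt.comp x hB
  -- x.1 = r
  have hx1 : x.1 = r := rfl
  -- divW computation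
  have hpow : HasFDerivAt (fun x' : ℝ × F => x'.1 ^ k)
      (((k : ℝ) * x.1 ^ (k - 1)) • ContinuousLinearMap.fst ℝ ℝ F) x :=
    (hasDerivAt_pow k x.1).comp_hasFDerivAt x hasFDerivAt_fst
  have ht1 : fderiv ℝ (fun x' => x'.1 ^ k * fderiv ℝ u x' (1, 0)) x (1, 0)
      = (k : ℝ) * r ^ (k - 1) * a + r ^ k * a1 := by
    rw [(hpow.fun_mul (hEval (1, 0))).fderiv]
    simp only [ContinuousLinearMap.add_apply, ContinuousLinearMap.coe_smul', Pi.smul_apply,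
      ContinuousLinearMap.comp_apply, ContinuousLinearMap.apply_apply,
      ContinuousLinearMap.coe_fst', smul_eq_mul]
    rw [hx1, ← hAdef, ← hadef, ← ha1def]
    ring
  have htj : ∀ j : Fin (n - 1),
      fderiv ℝ (fun x' => x'.1 ^ k * fderiv ℝ u x' (0, EuclideanSpace.single j 1)) x
        (0, EuclideanSpace.single j 1) = r ^ k * c j := by
    intro j
    rw [(hpow.fun_mul (hEval (0, EuclideanSpace.single j 1))).fderiv]
    simp only [ContinuousLinearMap.add_apply, ContinuousLinearMap.coe_smul', Pi.smul_apply,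
      ContinuousLinearMap.comp_apply, ContinuousLinearMap.apply_apply,
      ContinuousLinearMap.coe_fst', smul_eq_mul]
    simp only [hcdef]
    ring
  have hdivW : divW n k u x = (k : ℝ) * r ^ (k - 1) * a + r ^ k * a1 + r ^ k * ∑ j, c j := by
    unfold divW
    rw [ht1, Finset.sum_congr rfl fun j _ => htj j, ← Finset.mul_sum]
  -- fderiv of v on Ω
  have hfv : ∀ q' ∈ Ω, fderiv ℝ v q' = (fderiv ℝ u (Φ q')).comp (Φ' q') := by
    intro q' hq'
    have h1 := (hudiff _ (hΩmem q' hq')).hasFDerivAt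
    have h2 := hΦ'at q' (hq1ne q' hq')
    have h3 := h1.comp q' h2
    rw [hvΦ]; exact h3.fderiv
  -- z-direction second derivatives
  have hlapz : ∀ j : Fin (n - 1),
      fderiv ℝ (fun q' => fderiv ℝ v q' ((0 : E), EuclideanSpace.single j 1)) q
        ((0 : E), EuclideanSpace.single j 1) = c j := by
    intro j
    have hev : (fun q' => fderiv ℝ v q' ((0 : E), EuclideanSpace.single j 1)) =ᶠ[nhds q]
        (fun q' => fderiv ℝ u (Φ q') ((0 : ℝ), EuclideanSpace.single j 1)) := by
      filter_upwards [hΩopen.mem_nhds hq] with q' hq'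
      rw [hfv q' hq']
      simp only [ContinuousLinearMap.comp_apply]
      congr 1
      simp [hΦ'def]
    rw [hev.fderiv_eq]
    have hcomp : HasFDerivAt (fun q' => fderiv ℝ u (Φ q') ((0 : ℝ), EuclideanSpace.single j 1))
        ((((ContinuousLinearMap.apply ℝ ℝ ((0 : ℝ), EuclideanSpace.single j 1)).comp B)).comp
          (Φ' q)) q :=
      by have h := (hEval ((0 : ℝ), EuclideanSpace.single j 1)).comp q (hΦ'at q hy); exact h
    rw [hcomp.fderiv]
    simp [hΦ'def, hcdef]
  -- y-direction second derivatives
  have hlapy : ∀ i : Fin (k + 1),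
      fderiv ℝ (fun q' => fderiv ℝ v q' (EuclideanSpace.single i 1, (0 : F))) q
        (EuclideanSpace.single i 1, (0 : F))
      = (r⁻¹ * q.1 i) * ((r⁻¹ * q.1 i) * a1)
        + a * (r⁻¹ * 1 + q.1 i * (-(r ^ 2)⁻¹ * (r⁻¹ * q.1 i))) := by
    intro i
    have hPhiw : ∀ q0 : E × F, Φ' q0 (EuclideanSpace.single i 1, (0 : F))
        = (‖q0.1‖⁻¹ * q0.1 i) • ((1 : ℝ), (0 : F)) := by
      intro q0
      have h0 : (inner ℝ q0.1 (EuclideanSpace.single i (1 : ℝ)) : ℝ) = q0.1 i := by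
        rw [EuclideanSpace.inner_single_right]; simp
      simp [hΦ'def, Prod.smul_mk, h0]
    have hev : (fun q' => fderiv ℝ v q' (EuclideanSpace.single i 1, (0 : F))) =ᶠ[nhds q]
        (fun q' => (‖q'.1‖⁻¹ * q'.1 i) * fderiv ℝ u (Φ q') ((1 : ℝ), (0 : F))) := by
      filter_upwards [hΩopen.mem_nhds hq] with q' hq'
      rw [hfv q' hq']
      rw [ContinuousLinearMap.comp_apply, hPhiw q', map_smul, smul_eq_mul]
    have hn1 : HasFDerivAt (fun q' : E × F => ‖q'.1‖)
        ((‖q.1‖⁻¹ • innerSL ℝ q.1).comp (ContinuousLinearMap.fst ℝ E F)) q :=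
      (norm_hasFDerivAt hy).comp q hasFDerivAt_fst
    have hinv : HasFDerivAt (fun q' : E × F => ‖q'.1‖⁻¹)
        ((-(r ^ 2)⁻¹) • ((‖q.1‖⁻¹ • innerSL ℝ q.1).comp (ContinuousLinearMap.fst ℝ E F))) q :=
      (hasDerivAt_inv hrne).comp_hasFDerivAt q hn1
    have hproj : HasFDerivAt (fun q' : E × F => q'.1 i)
        ((EuclideanSpace.proj i).comp (ContinuousLinearMap.fst ℝ E F)) q :=
      ((EuclideanSpace.proj i).comp (ContinuousLinearMap.fst ℝ E F)).hasFDerivAt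
    have hf12 := hinv.fun_mul hproj
    have hA1 : HasFDerivAt (fun q' : E × F => fderiv ℝ u (Φ q') ((1 : ℝ), (0 : F)))
        (((ContinuousLinearMap.apply ℝ ℝ ((1 : ℝ), (0 : F))).comp B).comp (Φ' q)) q :=
      by have h := (hEval ((1 : ℝ), (0 : F))).comp q (hΦ'at q hy); exact h
    have htot := hf12.fun_mul hA1
    rw [hev.fderiv_eq, htot.fderiv]
    simp only [ContinuousLinearMap.add_apply, ContinuousLinearMap.coe_smul', Pi.smul_apply,
      ContinuousLinearMap.comp_apply, ContinuousLinearMap.apply_apply, hPhiw q, map_smul,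
      ContinuousLinearMap.smul_apply, smul_eq_mul, ContinuousLinearMap.coe_fst',
      PiLp.proj_apply, EuclideanSpace.single_apply, innerSL_apply_apply,
      EuclideanSpace.inner_single_right, starRingEnd_apply, star_trivial, if_pos rfl]
    rw [← hrdef, ← hAdef, ← hadef, ← ha1def]
    simp only [if_true, eq_self_iff_true]
    ring
  -- assemble lapV
  have hlap : lapV n k v q = ((a1 + (k : ℝ) * a / r) + ∑ j, c j) := by
    unfold lapV
    rw [Finset.sum_congr rfl fun j _ => hlapz j, Finset.sum_congr rfl fun i _ => hlapy i]
    have hsumsq : ∑ i : Fin (k + 1), (q.1 i) ^ 2 = r ^ 2 := by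
      rw [hrdef, EuclideanSpace.norm_eq, Real.sq_sqrt (by positivity)]
      exact Finset.sum_congr rfl fun i _ => by rw [Real.norm_eq_abs, sq_abs]
    have hterm : ∀ i : Fin (k + 1),
        (r⁻¹ * q.1 i) * ((r⁻¹ * q.1 i) * a1)
          + a * (r⁻¹ * 1 + q.1 i * (-(r ^ 2)⁻¹ * (r⁻¹ * q.1 i)))
        = ((r⁻¹)^2 * a1 - a * (r ^ 2)⁻¹ * r⁻¹) * (q.1 i) ^ 2 + a * r⁻¹ := fun i => by ring
    rw [Finset.sum_congr rfl fun i _ => hterm i, Finset.sum_add_distrib, ← Finset.mul_sum,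
      hsumsq]
    simp only [Finset.sum_const, Finset.card_univ, Fintype.card_fin, nsmul_eq_mul]
    field_simp
    push_cast
    ring
  -- conclude
  have hvq : v q = u x := hv q
  have hpd := hpde x hxΘ
  rw [hdivW, hx1] at hpd
  rw [hlap, hvq]
  have hcancel : r ^ k * (-(a1 + (k : ℝ) * a / r + ∑ j, c j))
      = r ^ k * (lam * u x + |u x| ^ (p - 2) * u x) := by
    have hrk : r ^ k * ((k : ℝ) * a / r) = (k : ℝ) * r ^ (k - 1) * a := by
      rcases k with _ | k'
      · simp
      · rw [pow_succ]
        field_simp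
        push_cast [Nat.add_sub_cancel]
        ring
    have : -(r ^ k * a1 + (k : ℝ) * r ^ (k - 1) * a + r ^ k * ∑ j, c j)
        = lam * r ^ k * u x + r ^ k * |u x| ^ (p - 2) * u x := by
      rw [← hpd]; ring_nf
    calc r ^ k * (-(a1 + (k : ℝ) * a / r + ∑ j, c j))
        = -(r ^ k * a1 + r ^ k * ((k : ℝ) * a / r) + r ^ k * ∑ j, c j) := by ring
      _ = -(r ^ k * a1 + (k : ℝ) * r ^ (k - 1) * a + r ^ k * ∑ j, c j) := by rw [hrk]
      _ = lam * r ^ k * u x + r ^ k * |u x| ^ (p - 2) * u x := this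
      _ = r ^ k * (lam * u x + |u x| ^ (p - 2) * u x) := by ring
  exact mul_left_cancel₀ (pow_ne_zero k hrne) hcancel

end
end
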